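/- arXiv:math/0502333 — 7 statements merged into one kernel-verified Lean document; each statement's English description precedes it below -/
import Mathlib

section
/- Let q be a real number with 0 < q < 1, and for natural numbers N define [N] = (1-q^N)/(1-q). For any natural numbers a, d ≥ 1, N ≥ 1 and prime p, one has q^a/[d p^N] = Σ_{i=0}^{p-1} q^{a + i d p^N} / [d p^{N+1}]. In other words, the assignment μ_q(a + dp^N Z_p) = q^a/[dp^N] satisfies the distribution (compatibility) property. -/
theorem mu_q_distribution (q : ℝ) (hq0 : 0 < q) (hq1 : q < 1)
    (p : ℕ) (hp : p.Prime) (a d N : ℕ) (hd : 1 ≤ d) (hN : 1 ≤ N) :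
    q ^ a / ((1 - q ^ (d * p ^ N)) / (1 - q)) =
      ∑ i ∈ Finset.range p,
        q ^ (a + i * d * p ^ N) / ((1 - q ^ (d * p ^ (N + 1))) / (1 - q)) := by
  have hm : 1 ≤ d * p ^ N := Nat.mul_pos hd (Nat.pow_pos (n := N) hp.pos)
  set x : ℝ := q ^ (d * p ^ N) with hx
  have hx0 : 0 < x := by positivity
  have hx1 : x < 1 := pow_lt_one₀ hq0.le hq1 (by omega)
  have hxp : q ^ (d * p ^ (N + 1)) = x ^ p := by
    rw [hx, ← pow_mul]; ring_nf
  have hgeo : 1 - x ^ p = (1 - x) * ∑ i ∈ Finset.range p, x ^ i := by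
    have := geom_sum_mul x p
    nlinarith [this]
  have hq' : (1 : ℝ) - q ≠ 0 := by linarith
  have h1x : (1 : ℝ) - x ≠ 0 := by linarith
  have hsum : ∑ i ∈ Finset.range p, x ^ i ≠ 0 := by
    have hpos : 0 < ∑ i ∈ Finset.range p, x ^ i := by
      apply Finset.sum_pos
      · intro i _; positivity
      · exact ⟨0, Finset.mem_range.mpr hp.pos⟩
    exact hpos.ne'
  have h1xp : (1 : ℝ) - x ^ p ≠ 0 := by rw [hgeo]; exact mul_ne_zero h1x hsum
  have hterm : ∀ i, q ^ (a + i * d * p ^ N) = q ^ a * x ^ i := by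
    intro i
    rw [hx, ← pow_mul, ← pow_add]
    ring_nf
  simp only [hxp, hterm]
  rw [← Finset.sum_div, ← Finset.mul_sum]
  rw [hgeo]
  field_simp
end

section
/- Let p be a prime, q ∈ Z_p (the p-adic integers) with |q - 1|_p < p^{-1/(p-1)} and q ≠ 1, and let [x] = (1-q^x)/(1-q). Then for every natural number m, the Riemann sums (1/[p^N]) Σ_{x=0}^{p^N - 1} q^x [x]^m converge p-adically as N → ∞ to (1/(1-q)^m) Σ_{i=0}^{m} C(m,i) (-1)^i (i+1)/[i+1]. -/
open Filter Finset

variable {p : ℕ} [hp : Fact p.Prime]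

lemma rpow_bound_le_one : (p : ℝ) ^ (-(1 : ℝ) / (p - 1)) ≤ 1 := by
  have hp1 : (1:ℝ) < p := by exact_mod_cast hp.out.one_lt
  apply Real.rpow_le_one_of_one_le_of_nonpos (le_of_lt hp1)
  apply div_nonpos_of_nonpos_of_nonneg <;> [norm_num; linarith]

lemma padic_norm_sum_lt {ι : Type*} {s : Finset ι} {f : ι → ℚ_[p]} {c : ℝ} (hc : 0 < c)
    (h : ∀ i ∈ s, ‖f i‖ < c) : ‖∑ i ∈ s, f i‖ < c := by
  classical
  induction s using Finset.cons_induction with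
  | empty => simpa using hc
  | cons a s ha ih =>
      rw [Finset.sum_cons]
      refine lt_of_le_of_lt (Padic.nonarchimedean _ _) (max_lt ?_ ?_)
      · exact h a (Finset.mem_cons_self a s)
      · exact ih fun i hi => h i (Finset.mem_cons_of_mem hi)

lemma padic_norm_sum_le {ι : Type*} {s : Finset ι} {f : ι → ℚ_[p]} {c : ℝ} (hc : 0 ≤ c)
    (h : ∀ i ∈ s, ‖f i‖ ≤ c) : ‖∑ i ∈ s, f i‖ ≤ c := by
  classical
  induction s using Finset.cons_induction with
  | empty => simpa using hc
  | cons a s ha ih =>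
      rw [Finset.sum_cons]
      refine le_trans (Padic.nonarchimedean _ _) (max_le ?_ ?_)
      · exact h a (Finset.mem_cons_self a s)
      · exact ih fun i hi => h i (Finset.mem_cons_of_mem hi)

lemma norm_pow_p_sub_one {u : ℚ_[p]} (hu : ‖u‖ ≤ 1)
    (hsm : ‖u - 1‖ < (p : ℝ) ^ (-(1 : ℝ) / (p - 1))) (hu1 : u ≠ 1) :
    ‖u ^ p - 1‖ = ‖u - 1‖ / p := by
  have hp2 : 2 ≤ p := hp.out.two_le
  have hppos : (0:ℝ) < p := by exact_mod_cast hp.out.pos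
  set t : ℚ_[p] := u - 1 with htdef
  have ht0 : t ≠ 0 := sub_ne_zero.mpr hu1
  have htpos : 0 < ‖t‖ := norm_pos_iff.mpr ht0
  have ht1 : ‖t‖ < 1 := lt_of_lt_of_le hsm rpow_bound_le_one
  -- ‖t‖^(p-1) < p⁻¹
  have hpow : ‖t‖ ^ (p - 1) < (p:ℝ)⁻¹ := by
    have h1 : ‖t‖ ^ (p-1) < ((p : ℝ) ^ (-(1 : ℝ) / (p - 1))) ^ (p-1) := by
      apply pow_lt_pow_left₀ hsm (norm_nonneg t) (by omega)
    have h2 : ((p : ℝ) ^ (-(1 : ℝ) / (p - 1))) ^ (p-1) = (p:ℝ)⁻¹ := by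
      rw [← Real.rpow_natCast ((p : ℝ) ^ (-(1 : ℝ) / (p - 1))) (p-1), ← Real.rpow_mul (le_of_lt hppos)]
      have : (-(1 : ℝ) / (p - 1)) * ((p:ℕ) - 1 : ℕ) = -1 := by
        have : ((p - 1 : ℕ) : ℝ) = (p:ℝ) - 1 := by
          push_cast [Nat.cast_sub (by omega : 1 ≤ p)]; ring
        rw [this]
        have : (p:ℝ) - 1 ≠ 0 := by
          have : (1:ℝ) < p := by exact_mod_cast hp.out.one_lt
          linarith
        field_simp
      rw [this, Real.rpow_neg_one]
    rw [← h2]; exact h1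
  have hkey : u ^ p - 1 = p * t + ∑ k ∈ Ico 2 (p+1), t ^ k * (p.choose k : ℚ_[p]) := by
    have hu' : u = t + 1 := by rw [htdef]; ring
    rw [hu', add_pow]
    rw [Finset.range_eq_Ico, Finset.sum_eq_sum_Ico_succ_bot (by omega : 0 < p + 1),
      Finset.sum_eq_sum_Ico_succ_bot (by omega : 1 < p + 1)]
    simp
    ring
  -- bound each term in the remainder
  have hterm : ∀ k ∈ Ico 2 (p+1), ‖t ^ k * (p.choose k : ℚ_[p])‖ < ‖(p:ℚ_[p]) * t‖ := by
    intro k hk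
    simp only [Finset.mem_Ico] at hk
    rw [norm_mul, norm_mul, Padic.norm_p, norm_pow]
    rcases eq_or_lt_of_le (by omega : k ≤ p) with hkp | hkp
    · -- k = p
      rw [hkp]
      simp only [Nat.choose_self, Nat.cast_one, norm_one, mul_one]
      calc ‖t‖ ^ p = ‖t‖ ^ (p-1) * ‖t‖ := by
            rw [← pow_succ]; congr 1; omega
        _ < (p:ℝ)⁻¹ * ‖t‖ := by
            apply mul_lt_mul_of_pos_right _ htpos
            exact hpow
    · have hdvd : (p:ℤ) ∣ (p.choose k : ℤ) := by
        exact_mod_cast hp.out.dvd_choose_self (by omega) hkp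
      have hch : ‖((p.choose k : ℤ) : ℚ_[p])‖ ≤ (p:ℝ)⁻¹ := by
        have := (Padic.norm_int_le_pow_iff_dvd (p.choose k : ℤ) 1).mpr (by simpa using hdvd)
        simpa using this
      calc ‖t‖ ^ k * ‖((p.choose k : ℕ) : ℚ_[p])‖
          ≤ ‖t‖ ^ k * (p:ℝ)⁻¹ := by
            apply mul_le_mul_of_nonneg_left _ (by positivity)
            exact_mod_cast hch
        _ ≤ ‖t‖ ^ 2 * (p:ℝ)⁻¹ := by
            apply mul_le_mul_of_nonneg_right _ (by positivity)
            exact pow_le_pow_of_le_one (norm_nonneg t) (le_of_lt ht1) hk.1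
        _ < ‖t‖ * (p:ℝ)⁻¹ := by
            apply mul_lt_mul_of_pos_right _ (by positivity)
            calc ‖t‖^2 = ‖t‖ * ‖t‖ := sq ‖t‖
              _ < 1 * ‖t‖ := by exact mul_lt_mul_of_pos_right ht1 htpos
              _ = ‖t‖ := one_mul _
        _ = (p:ℝ)⁻¹ * ‖t‖ := mul_comm _ _
  have hsum : ‖∑ k ∈ Ico 2 (p+1), t ^ k * (p.choose k : ℚ_[p])‖ < ‖(p:ℚ_[p]) * t‖ := by
    have hpos : 0 < ‖(p:ℚ_[p]) * t‖ := by
      rw [norm_mul, Padic.norm_p]; positivity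
    exact padic_norm_sum_lt hpos hterm
  have hbig : ‖(p:ℚ_[p]) * t‖ = ‖t‖ / p := by
    rw [norm_mul, Padic.norm_p, inv_mul_eq_div]
  rw [hkey, Padic.add_eq_max_of_ne (ne_of_gt hsum), max_eq_left (le_of_lt hsum), hbig]

lemma norm_pow_pow_sub_one {z : ℚ_[p]} (hz : ‖z‖ ≤ 1)
    (hsm : ‖z - 1‖ < (p : ℝ) ^ (-(1 : ℝ) / (p - 1))) (hz1 : z ≠ 1) (N : ℕ) :
    ‖z ^ (p ^ N) - 1‖ = ‖z - 1‖ / p ^ N := by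
  induction N with
  | zero => simp
  | succ N ih =>
      have hppos : (0:ℝ) < p := by exact_mod_cast hp.out.pos
      have hzpos : 0 < ‖z - 1‖ := norm_pos_iff.mpr (sub_ne_zero.mpr hz1)
      have hz1' : z ^ (p ^ N) ≠ 1 := by
        have hh : 0 < ‖z ^ (p ^ N) - 1‖ := by
          rw [ih]; exact div_pos hzpos (by positivity)
        intro h
        rw [h, sub_self, norm_zero] at hh
        exact lt_irrefl 0 hh
      have hnorm : ‖z ^ (p ^ N)‖ ≤ 1 := by
        rw [norm_pow]; exact pow_le_one₀ (norm_nonneg z) hz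
      have hsm' : ‖z ^ (p ^ N) - 1‖ < (p : ℝ) ^ (-(1 : ℝ) / (p - 1)) := by
        rw [ih]
        calc ‖z - 1‖ / (p:ℝ) ^ N ≤ ‖z - 1‖ / 1 := by
              apply div_le_div_of_nonneg_left (norm_nonneg _) one_pos
              exact one_le_pow₀ (by exact_mod_cast hp.out.one_le)
          _ = ‖z - 1‖ := div_one _
          _ < _ := hsm
      have := norm_pow_p_sub_one hnorm hsm' hz1'
      rw [← pow_mul, ← pow_succ] at this
      rw [this, ih, pow_succ, div_div]

lemma pow_ne_one {z : ℚ_[p]} (hz : ‖z‖ ≤ 1)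
    (hsm : ‖z - 1‖ < (p : ℝ) ^ (-(1 : ℝ) / (p - 1))) (hz1 : z ≠ 1) {n : ℕ} (hn : n ≠ 0) :
    z ^ n ≠ 1 := by
  intro hcon
  set v := n.factorization p with hv
  set u := n / p ^ v with hudef
  have hnu : p ^ v * u = n := Nat.ordProj_mul_ordCompl_eq_self n p
  have hpu : ¬ p ∣ u := Nat.not_dvd_ordCompl hp.out hn
  set w := z ^ (p ^ v) with hwdef
  have hzn1 : z - 1 ≠ 0 := sub_ne_zero.mpr hz1
  have hzpos : 0 < ‖z - 1‖ := norm_pos_iff.mpr (sub_ne_zero.mpr hz1)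
  have hppos : (0:ℝ) < p := by exact_mod_cast hp.out.pos
  have hw1 : w ≠ 1 := by
    have hh : 0 < ‖w - 1‖ := by
      rw [hwdef, norm_pow_pow_sub_one hz hsm hz1 v]
      exact div_pos hzpos (by positivity)
    intro h
    rw [h, sub_self, norm_zero] at hh
    exact lt_irrefl 0 hh
  have hwn : ‖w‖ ≤ 1 := by
    rw [hwdef, norm_pow]; exact pow_le_one₀ (norm_nonneg z) hz
  have hwsm : ‖w - 1‖ < 1 := by
    rw [hwdef, norm_pow_pow_sub_one hz hsm hz1 v]
    calc ‖z - 1‖ / (p:ℝ) ^ v ≤ ‖z - 1‖ / 1 := by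
          apply div_le_div_of_nonneg_left (norm_nonneg _) one_pos
          exact one_le_pow₀ (by exact_mod_cast hp.out.one_le)
      _ = ‖z - 1‖ := div_one _
      _ < (p : ℝ) ^ (-(1 : ℝ) / (p - 1)) := hsm
      _ ≤ 1 := rpow_bound_le_one
  have hwu : w ^ u = 1 := by
    rw [hwdef, ← pow_mul, hnu, hcon]
  have hgeom : (∑ i ∈ range u, w ^ i) * (w - 1) = 0 := by
    rw [geom_sum_mul, hwu, sub_self]
  have hSzero : (∑ i ∈ range u, w ^ i) = 0 := by
    rcases mul_eq_zero.mp hgeom with h | h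
    · exact h
    · exact absurd h (sub_ne_zero.mpr hw1)
  have hclose : ‖(∑ i ∈ range u, w ^ i) - (u : ℚ_[p])‖ < 1 := by
    have : (∑ i ∈ range u, w ^ i) - (u : ℚ_[p]) = ∑ i ∈ range u, (w ^ i - 1) := by
      rw [Finset.sum_sub_distrib]; simp
    rw [this]
    apply padic_norm_sum_lt one_pos
    intro i _
    have : w ^ i - 1 = (∑ k ∈ range i, w ^ k) * (w - 1) := (geom_sum_mul w i).symm
    rw [this, norm_mul]
    calc ‖∑ k ∈ range i, w ^ k‖ * ‖w - 1‖ ≤ 1 * ‖w - 1‖ := by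
          apply mul_le_mul_of_nonneg_right _ (norm_nonneg _)
          apply padic_norm_sum_le zero_le_one
          intro k _
          rw [norm_pow]; exact pow_le_one₀ (norm_nonneg w) hwn
      _ = ‖w - 1‖ := one_mul _
      _ < 1 := hwsm
  rw [hSzero, zero_sub, norm_neg] at hclose
  have : (p:ℤ) ∣ (u:ℤ) := by
    rw [← Padic.norm_intCast_lt_one_iff]
    exact_mod_cast hclose
  exact hpu (by exact_mod_cast this)

lemma tendsto_pow_pow {z : ℚ_[p]} (hz : ‖z‖ ≤ 1)
    (hsm : ‖z - 1‖ < (p : ℝ) ^ (-(1 : ℝ) / (p - 1))) (hz1 : z ≠ 1) :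
    Tendsto (fun N : ℕ => z ^ (p ^ N)) atTop (nhds 1) := by
  rw [tendsto_iff_norm_sub_tendsto_zero]
  have heq : (fun N : ℕ => ‖z ^ p ^ N - 1‖) = fun N => ‖z - 1‖ * ((p:ℝ)⁻¹) ^ N := by
    funext N
    rw [norm_pow_pow_sub_one hz hsm hz1 N, div_eq_mul_inv, inv_pow]
  rw [heq]
  have : Tendsto (fun N : ℕ => ((p:ℝ)⁻¹) ^ N) atTop (nhds 0) := by
    apply tendsto_pow_atTop_nhds_zero_of_lt_one (by positivity)
    rw [inv_lt_one_iff₀]; right; exact_mod_cast hp.out.one_lt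
  simpa using this.const_mul ‖z - 1‖

theorem padic_q_integral_xm (p : ℕ) [Fact p.Prime] (q : ℤ_[p])
    (hq : ‖(q : ℚ_[p]) - 1‖ < (p : ℝ) ^ (-(1 : ℝ) / (p - 1))) (hq1 : q ≠ 1) (m : ℕ) :
    Tendsto
      (fun N : ℕ =>
        ((1 - (q : ℚ_[p])) / (1 - (q : ℚ_[p]) ^ (p ^ N))) *
          ∑ x ∈ Finset.range (p ^ N),
            (q : ℚ_[p]) ^ x * ((1 - (q : ℚ_[p]) ^ x) / (1 - (q : ℚ_[p]))) ^ m)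
      atTop
      (nhds ((1 / (1 - (q : ℚ_[p])) ^ m) *
        ∑ i ∈ Finset.range (m + 1),
          (m.choose i : ℚ_[p]) * (-1) ^ i *
            ((i + 1 : ℚ_[p]) / ((1 - (q : ℚ_[p]) ^ (i + 1)) / (1 - (q : ℚ_[p])))))) := by
  set z : ℚ_[p] := (q : ℚ_[p]) with hzdef
  have hz : ‖z‖ ≤ 1 := q.2
  have hz1 : z ≠ 1 := by
    intro h
    rw [hzdef] at h
    exact hq1 (Subtype.ext h)
  have h1z : (1:ℚ_[p]) - z ≠ 0 := fun h => hz1 (by linear_combination -h)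
  have hzi : ∀ i : ℕ, (1:ℚ_[p]) - z ^ (i+1) ≠ 0 := by
    intro i h
    exact pow_ne_one hz hq hz1 (by omega : i + 1 ≠ 0) (by linear_combination -h)
  -- the continuous function F
  set F : ℚ_[p] → ℚ_[p] := fun w =>
    (1 / (1 - z) ^ m) * ∑ i ∈ Finset.range (m + 1),
      (m.choose i : ℚ_[p]) * (-1) ^ i *
        ((∑ j ∈ Finset.range (i+1), w ^ j) / ((1 - z ^ (i + 1)) / (1 - z))) with hF
  have hFcont : Continuous F := by
    apply continuous_const.mul
    apply continuous_finset_sum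
    intro i _
    exact continuous_const.mul ((continuous_finset_sum _ fun j _ => (continuous_pow j : Continuous fun w : ℚ_[p] => w ^ j)).div_const _)
  have hF1 : F 1 = (1 / (1 - z) ^ m) *
      ∑ i ∈ Finset.range (m + 1),
        (m.choose i : ℚ_[p]) * (-1) ^ i *
          ((i + 1 : ℚ_[p]) / ((1 - z ^ (i + 1)) / (1 - z))) := by
    simp only [hF, one_pow, Finset.sum_const, Finset.card_range, nsmul_eq_mul, mul_one]
    push_cast
    ring_nf
  have hkey : ∀ N : ℕ,
      ((1 - z) / (1 - z ^ (p ^ N))) *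
        ∑ x ∈ Finset.range (p ^ N), z ^ x * ((1 - z ^ x) / (1 - z)) ^ m
      = F (z ^ (p ^ N)) := by
    intro N
    have hpN : (p:ℕ) ^ N ≠ 0 := (pow_pos (Nat.Prime.pos Fact.out) N).ne'
    set w : ℚ_[p] := z ^ (p ^ N) with hw
    have hw1 : w ≠ 1 := pow_ne_one hz hq hz1 hpN
    have h1w : (1:ℚ_[p]) - w ≠ 0 := fun h => hw1 (by linear_combination -h)
    have hxterm : ∀ x : ℕ, z ^ x * ((1 - z ^ x) / (1 - z)) ^ m
        = ∑ i ∈ Finset.range (m+1),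
            ((m.choose i : ℚ_[p]) * (-1) ^ i / (1 - z) ^ m) * (z ^ (i+1)) ^ x := by
      intro x
      rw [div_pow, show (1 - z ^ x) = (-(z^x)) + 1 by ring, add_pow]
      rw [Finset.sum_div, Finset.mul_sum]
      apply Finset.sum_congr rfl
      intro i _
      have : (z ^ (i+1)) ^ x = z ^ x * (z ^ x) ^ i := by
        rw [← pow_mul, ← pow_mul, ← pow_add]
        congr 1
        ring
      rw [this, neg_pow]
      field_simp
      ring
    rw [Finset.sum_congr rfl (fun x _ => hxterm x), Finset.sum_comm]
    have hgeo : ∀ i : ℕ, ∑ x ∈ Finset.range (p ^ N), (z ^ (i+1)) ^ x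
        = ((z ^ (i+1)) ^ (p ^ N) - 1) / (z ^ (i+1) - 1) := by
      intro i
      exact geom_sum_eq (fun h => hzi i (by linear_combination -h)) _
    have hpowsw : ∀ i : ℕ, (z ^ (i+1)) ^ (p ^ N) = w ^ (i+1) := by
      intro i
      rw [hw, ← pow_mul, ← pow_mul, mul_comm]
    simp only [hF]
    rw [Finset.mul_sum, Finset.mul_sum]
    apply Finset.sum_congr rfl
    intro i _
    rw [← Finset.mul_sum, hgeo i]
    rw [hpowsw i, show w ^ (i+1) - 1 = (∑ j ∈ Finset.range (i+1), w ^ j) * (w - 1) from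
      (geom_sum_mul w (i+1)).symm]
    have hzi' : z ^ (i+1) - 1 ≠ 0 := fun h => hzi i (by linear_combination -h)
    have hzi2 : (1:ℚ_[p]) - z * z ^ i ≠ 0 := by
      have := hzi i; rwa [pow_succ'] at this
    have hzi3 : z * z ^ i - 1 ≠ 0 := fun h => hzi2 (by linear_combination -h)
    field_simp
    rw [eq_div_iff (hzi i)]
    ring
  have := (hFcont.tendsto 1).comp (tendsto_pow_pow hz hq hz1)
  rw [hF1] at this
  exact Tendsto.congr (fun N => (hkey N).symm) this
end

section
/- Let q be real with 0 < q < 1, let r ≥ 1, h be integers, and α_1,…,α_r be integers such that jα_l + h - l + 1 ≠ 0 for all 0 ≤ j ≤ n and 1 ≤ l ≤ r. Define β_n^{(h,r)}(q | α_1,…,α_r) = (1/(1-q)^n) Σ_{j=0}^{n} C(n,j) (-1)^j ∏_{l=1}^{r} (jα_l + h - l + 1)/[jα_l + h - l + 1], where [m] = (1-q^m)/(1-q). Then for every natural number m, Σ_{i=0}^{m} C(m,i) (q-1)^i β_i^{(h,r)}(q | α_1,…,α_r) = ∏_{j=1}^{r} (m α_j + h - j + 1)/[m α_j + h - j + 1].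 -/
open Finset

/-- q-integer `[m] = (1-q^m)/(1-q)` for an integer exponent. -/
noncomputable def qint (q : ℝ) (m : ℤ) : ℝ := (1 - q ^ m) / (1 - q)

/-- The extended Changhee q-Bernoulli numbers `β_n^{(h,r)}(q | α_1,…,α_r)`,
with the weights indexed by `l ∈ {0,…,r-1}` representing `α_{l+1}`. -/
noncomputable def changheeBeta (q : ℝ) (h : ℤ) (r : ℕ) (α : ℕ → ℤ) (n : ℕ) : ℝ :=
  (1 / (1 - q) ^ n) *
    ∑ j ∈ Finset.range (n + 1),
      (n.choose j : ℝ) * (-1) ^ j *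
        ∏ l ∈ Finset.range r,
          (((j : ℤ) * α l + h - l : ℤ) : ℝ) / qint q ((j : ℤ) * α l + h - l)

lemma key_orth (m j : ℕ) (hj : j ≤ m) :
    ∑ i ∈ Finset.range (m + 1), ((m.choose i : ℝ) * (i.choose j) * (-1) ^ (i + j))
      = if j = m then 1 else 0 := by
  rw [← Finset.sum_range_add_sum_Ico _ (Nat.le_succ_of_le hj)]
  have h0 : ∑ i ∈ Finset.range j, ((m.choose i : ℝ) * (i.choose j) * (-1) ^ (i + j)) = 0 := by
    apply Finset.sum_eq_zero
    intro i hi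
    rw [Nat.choose_eq_zero_of_lt (Finset.mem_range.mp hi)]
    simp
  rw [h0, zero_add, Finset.sum_Ico_eq_sum_range]
  have hsub : m + 1 - j = (m - j) + 1 := by omega
  rw [hsub]
  have hterm : ∀ k ∈ Finset.range (m - j + 1),
      ((m.choose (j + k) : ℝ) * ((j + k).choose j) * (-1) ^ (j + k + j))
        = (m.choose j : ℝ) * ((-1) ^ k * ((m - j).choose k)) := by
    intro k hk
    have hk' : k ≤ m - j := by have := Finset.mem_range.mp hk; omega
    have h1 : m.choose (j + k) * (j + k).choose j = m.choose j * (m - j).choose k := by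
      have := Nat.choose_mul (n := m) (k := j + k) (s := j) (by omega)
      simpa [Nat.add_sub_cancel_left] using this
    have h2 : ((-1 : ℝ)) ^ (j + k + j) = (-1) ^ k := by
      rw [show j + k + j = k + 2 * j by ring, pow_add, pow_mul]
      simp
    rw [h2, mul_comm ((-1:ℝ)^k), ← mul_assoc, ← Nat.cast_mul, h1, Nat.cast_mul]
  rw [Finset.sum_congr rfl hterm, ← Finset.mul_sum]
  have hcast : ∑ k ∈ Finset.range (m - j + 1), ((-1 : ℝ)) ^ k * ((m - j).choose k)
      = if m - j = 0 then 1 else 0 := by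
    exact_mod_cast congrArg (Int.cast : ℤ → ℝ)
      (Int.alternating_sum_range_choose (n := m - j))
  rw [hcast]
  rcases eq_or_lt_of_le hj with rfl | hlt
  · simp
  · rw [if_neg (by omega), if_neg (by omega), mul_zero]

theorem changhee_inverse_formula (q : ℝ) (hq0 : 0 < q) (hq1 : q < 1)
    (h : ℤ) (r : ℕ) (hr : 1 ≤ r) (α : ℕ → ℤ) (m : ℕ)
    (hnz : ∀ j : ℕ, j ≤ m → ∀ l ∈ Finset.range r, (j : ℤ) * α l + h - l ≠ 0) :
    ∑ i ∈ Finset.range (m + 1),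
        (m.choose i : ℝ) * (q - 1) ^ i * changheeBeta q h r α i =
      ∏ l ∈ Finset.range r,
        (((m : ℤ) * α l + h - l : ℤ) : ℝ) / qint q ((m : ℤ) * α l + h - l) := by
  classical
  have h1q : (1 - q) ≠ 0 := by linarith
  set f : ℕ → ℝ := fun j => ∏ l ∈ Finset.range r,
      (((j : ℤ) * α l + h - l : ℤ) : ℝ) / qint q ((j : ℤ) * α l + h - l) with hf
  have step1 : ∀ i ∈ Finset.range (m + 1),
      (m.choose i : ℝ) * (q - 1) ^ i * changheeBeta q h r α i
        = ∑ j ∈ Finset.range (m + 1),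
            ((m.choose i : ℝ) * (i.choose j) * (-1) ^ (i + j)) * f j := by
    intro i hi
    have hi' : i ≤ m := by have := Finset.mem_range.mp hi; omega
    have hqq : (q - 1) ^ i * (1 / (1 - q) ^ i) = (-1 : ℝ) ^ i := by
      rw [show q - 1 = (-1) * (1 - q) by ring, mul_pow]
      field_simp
    rw [changheeBeta]
    have hext : ∑ j ∈ Finset.range (i + 1), (i.choose j : ℝ) * (-1) ^ j * f j
        = ∑ j ∈ Finset.range (m + 1), (i.choose j : ℝ) * (-1) ^ j * f j := by
      apply Finset.sum_subset (Finset.range_subset_range.mpr (by omega))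
      intro j _ hj
      have : i < j := by simpa using hj
      rw [Nat.choose_eq_zero_of_lt this]
      simp
    calc (m.choose i : ℝ) * (q - 1) ^ i *
          ((1 / (1 - q) ^ i) * ∑ j ∈ Finset.range (i + 1),
            (i.choose j : ℝ) * (-1) ^ j * f j)
        = (m.choose i : ℝ) * ((q - 1) ^ i * (1 / (1 - q) ^ i)) *
            ∑ j ∈ Finset.range (i + 1), (i.choose j : ℝ) * (-1) ^ j * f j := by ring
      _ = (m.choose i : ℝ) * (-1) ^ i *
            ∑ j ∈ Finset.range (m + 1), (i.choose j : ℝ) * (-1) ^ j * f j := by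
          rw [hqq, hext]
      _ = ∑ j ∈ Finset.range (m + 1),
            ((m.choose i : ℝ) * (i.choose j) * (-1) ^ (i + j)) * f j := by
          rw [Finset.mul_sum]
          refine Finset.sum_congr rfl fun j _ => ?_
          rw [pow_add]
          ring
  rw [Finset.sum_congr rfl step1, Finset.sum_comm]
  have : ∀ j ∈ Finset.range (m + 1),
      ∑ i ∈ Finset.range (m + 1),
        ((m.choose i : ℝ) * (i.choose j) * (-1) ^ (i + j)) * f j
        = (if j = m then 1 else 0) * f j := by
    intro j hj
    rw [← Finset.sum_mul, key_orth m j (by have := Finset.mem_range.mp hj; omega)]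
  rw [Finset.sum_congr rfl this,
    show (∏ l ∈ Finset.range r,
        ((((m : ℤ) * α l + h - l : ℤ)) : ℝ) / qint q ((m : ℤ) * α l + h - l)) = f m from rfl]
  simp
end

section
/- Let q be real with 0 < q < 1, h an integer, r ≥ 1, w a natural number, and α_1,…,α_r positive integers (with all quantities jα_l + h - l + 1 nonzero for 0 ≤ j ≤ n). Define β_n^{(h,r)}(w, q | α_1,…,α_r) = (1/(1-q)^n) Σ_{j=0}^{n} C(n,j)(-q^w)^j ∏_{l=1}^{r} (jα_l + h - l + 1)/[jα_l + h - l + 1], and β_j^{(h,r)}(q|α) = β_j^{(h,r)}(0, q|α). Then β_n^{(h,r)}(w, q | α_1,…,α_r) = Σ_{j=0}^{n} C(n,j) q^{wj} β_j^{(h,r)}(q | α_1,…,α_r) [w]^{n-j}, where [w] = (1-q^w)/(1-q). -/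
open Finset

/-- The extended Changhee q-Bernoulli polynomial `β_n^{(h,r)}(w, q | α_1,…,α_r)`,
with the weights indexed by `l ∈ {0,…,r-1}` representing `α_{l+1}`. -/
noncomputable def changheeBetaPoly (q : ℝ) (h : ℤ) (r : ℕ) (α : ℕ → ℤ) (w : ℕ) (n : ℕ) : ℝ :=
  (1 / (1 - q) ^ n) *
    ∑ j ∈ Finset.range (n + 1),
      (n.choose j : ℝ) * (-(q ^ w)) ^ j *
        ∏ l ∈ Finset.range r,
          (((j : ℤ) * α l + h - l : ℤ) : ℝ) / qint q ((j : ℤ) * α l + h - l)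

lemma inner_binom (x : ℝ) (n i : ℕ) (hi : i ≤ n) :
    ∑ j ∈ Finset.Ico i (n + 1),
      (n.choose j : ℝ) * (j.choose i : ℝ) * x ^ j * (1 - x) ^ (n - j)
      = (n.choose i : ℝ) * x ^ i := by
  rw [Finset.sum_Ico_eq_sum_range]
  have hni : n + 1 - i = (n - i) + 1 := by omega
  rw [hni]
  have : ∀ k ∈ Finset.range ((n - i) + 1),
      (n.choose (i + k) : ℝ) * ((i + k).choose i : ℝ) * x ^ (i + k) * (1 - x) ^ (n - (i + k))
      = ((n.choose i : ℝ) * x ^ i) * (x ^ k * (1 - x) ^ ((n - i) - k) * ((n - i).choose k : ℝ)) := by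
    intro k hk
    rw [Finset.mem_range] at hk
    have hk' : k ≤ n - i := by omega
    have hle : i + k ≤ n := by omega
    have hcc : n.choose (i + k) * (i + k).choose i = n.choose i * (n - i).choose (i + k - i) :=
      Nat.choose_mul (Nat.le_add_right i k)
    have hcc' : (n.choose (i + k) : ℝ) * ((i + k).choose i : ℝ)
        = (n.choose i : ℝ) * ((n - i).choose k : ℝ) := by
      have := congrArg (Nat.cast (R := ℝ)) hcc
      push_cast at this
      simpa using this
    have hsub : n - (i + k) = (n - i) - k := by omega
    rw [hcc', hsub, pow_add]
    ring
  rw [Finset.sum_congr rfl this, ← Finset.mul_sum]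
  have hbin : ∑ k ∈ Finset.range ((n - i) + 1),
      x ^ k * (1 - x) ^ ((n - i) - k) * ((n - i).choose k : ℝ) = 1 := by
    have := add_pow x (1 - x) (n - i)
    simp only [add_sub_cancel, one_pow] at this
    rw [← this]
  rw [hbin, mul_one]

lemma key (x : ℝ) (a : ℕ → ℝ) (n : ℕ) :
    ∑ j ∈ Finset.range (n + 1),
      (n.choose j : ℝ) * x ^ j *
        (∑ i ∈ Finset.range (j + 1), (j.choose i : ℝ) * (-1 : ℝ) ^ i * a i) * (1 - x) ^ (n - j)
    = ∑ i ∈ Finset.range (n + 1), (n.choose i : ℝ) * (-x) ^ i * a i := by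
  have step : ∀ j ∈ Finset.range (n + 1),
      (n.choose j : ℝ) * x ^ j *
        (∑ i ∈ Finset.range (j + 1), (j.choose i : ℝ) * (-1 : ℝ) ^ i * a i) * (1 - x) ^ (n - j)
      = ∑ i ∈ Finset.range (j + 1),
          (n.choose j : ℝ) * (j.choose i : ℝ) * x ^ j * (1 - x) ^ (n - j) * ((-1 : ℝ) ^ i * a i) := by
    intro j _
    rw [Finset.mul_sum, Finset.sum_mul]
    exact Finset.sum_congr rfl fun i _ => by ring
  rw [Finset.sum_congr rfl step]
  have swap : ∑ j ∈ Finset.range (n + 1), ∑ i ∈ Finset.range (j + 1),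
        (n.choose j : ℝ) * (j.choose i : ℝ) * x ^ j * (1 - x) ^ (n - j) * ((-1 : ℝ) ^ i * a i)
      = ∑ i ∈ Finset.range (n + 1), ∑ j ∈ Finset.Ico i (n + 1),
        (n.choose j : ℝ) * (j.choose i : ℝ) * x ^ j * (1 - x) ^ (n - j) * ((-1 : ℝ) ^ i * a i) := by
    simp only [Finset.range_eq_Ico]
    exact (Finset.sum_Ico_Ico_comm 0 (n + 1)
      (fun i j => (n.choose j : ℝ) * (j.choose i : ℝ) * x ^ j * (1 - x) ^ (n - j) *
        ((-1 : ℝ) ^ i * a i)) : _).symm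
  rw [swap]
  refine Finset.sum_congr rfl fun i hi => ?_
  rw [Finset.mem_range] at hi
  have hi' : i ≤ n := by omega
  have : ∑ j ∈ Finset.Ico i (n + 1),
      (n.choose j : ℝ) * (j.choose i : ℝ) * x ^ j * (1 - x) ^ (n - j) * ((-1 : ℝ) ^ i * a i)
      = (∑ j ∈ Finset.Ico i (n + 1),
          (n.choose j : ℝ) * (j.choose i : ℝ) * x ^ j * (1 - x) ^ (n - j)) * ((-1 : ℝ) ^ i * a i) := by
    rw [Finset.sum_mul]
  rw [this, inner_binom x n i hi', neg_pow]
  ring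

theorem changhee_addition_formula (q : ℝ) (hq0 : 0 < q) (hq1 : q < 1)
    (h : ℤ) (r : ℕ) (hr : 1 ≤ r) (α : ℕ → ℤ) (hα : ∀ l ∈ Finset.range r, 0 < α l)
    (n : ℕ) (w : ℕ)
    (hnz : ∀ j : ℕ, j ≤ n → ∀ l ∈ Finset.range r, (j : ℤ) * α l + h - l ≠ 0) :
    changheeBetaPoly q h r α w n =
      ∑ j ∈ Finset.range (n + 1),
        (n.choose j : ℝ) * q ^ (w * j) * changheeBetaPoly q h r α 0 j *
          ((1 - q ^ w) / (1 - q)) ^ (n - j) := by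
  set P : ℕ → ℝ := fun j =>
    ∏ l ∈ Finset.range r,
      (((j : ℤ) * α l + h - l : ℤ) : ℝ) / qint q ((j : ℤ) * α l + h - l) with hP
  have hq : (1 : ℝ) - q ≠ 0 := by linarith
  set x : ℝ := q ^ w with hx
  have hstep : ∀ j ∈ Finset.range (n + 1),
      (n.choose j : ℝ) * q ^ (w * j) * changheeBetaPoly q h r α 0 j *
          ((1 - q ^ w) / (1 - q)) ^ (n - j)
      = (1 / (1 - q) ^ n) *
          ((n.choose j : ℝ) * x ^ j *
            (∑ i ∈ Finset.range (j + 1), (j.choose i : ℝ) * (-1 : ℝ) ^ i * P i) *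
            (1 - x) ^ (n - j)) := by
    intro j hj
    rw [Finset.mem_range] at hj
    have hjn : j ≤ n := by omega
    rw [changheeBetaPoly]
    simp only [pow_zero, ← hP]
    have h1 : q ^ (w * j) = x ^ j := by rw [hx, pow_mul]
    have h2 : ((1 - q ^ w) / (1 - q)) ^ (n - j) = (1 - x) ^ (n - j) / (1 - q) ^ (n - j) := by
      rw [div_pow, hx]
    have h3 : (1 - q) ^ n = (1 - q) ^ j * (1 - q) ^ (n - j) := by
      rw [← pow_add]; congr 1; omega
    rw [h1, h2, h3]
    have hj0 : (1 - q) ^ j ≠ 0 := pow_ne_zero _ hq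
    have hnj0 : (1 - q) ^ (n - j) ≠ 0 := pow_ne_zero _ hq
    generalize (∑ i ∈ Finset.range (j + 1), (j.choose i : ℝ) * (-1 : ℝ) ^ i * P i) = S
    field_simp
  rw [Finset.sum_congr rfl hstep, ← Finset.mul_sum, key x P n, changheeBetaPoly]
end

section
/- Let p be a prime, q ∈ Z_p with |q-1|_p < p^{-1/(p-1)}, q ≠ 1, let h be an integer and n, α natural numbers with α ≥ 1. Then the p-adic limit lim_{N→∞} (1/[p^N]) Σ_{x=0}^{p^N - 1} q^{hx} [αx]^n exists and equals (1/(1-q)^n) Σ_{j=0}^{n} C(n,j)(-1)^j (jα + h)/[jα + h], provided jα + h ≠ 0 for 0 ≤ j ≤ n. Here [m] = (1-q^m)/(1-q) and q^x = exp(x log q). -/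
open Filter Finset

section aux
variable {p : ℕ} [hp : Fact p.Prime]

lemma eps_lt_one (p : ℕ) [hp : Fact p.Prime] : (p : ℝ) ^ (-(1 : ℝ) / (p - 1)) < 1 := by
  have hp2 : 2 ≤ p := hp.out.two_le
  have h1 : (1 : ℝ) < p := by exact_mod_cast hp.out.one_lt
  apply Real.rpow_lt_one_of_one_lt_of_neg h1
  have : (0:ℝ) < (p:ℝ) - 1 := by linarith
  rw [div_neg_iff]
  right
  constructor <;> [linarith; exact this]

lemma eps_pow_aux (p : ℕ) [hp : Fact p.Prime] {s : ℝ} (h0 : 0 ≤ s)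
    (hs : s < (p : ℝ) ^ (-(1 : ℝ) / (p - 1))) : s ^ (p - 1 : ℕ) < (p : ℝ)⁻¹ := by
  have h1 : (1 : ℝ) < p := by exact_mod_cast hp.out.one_lt
  have hple : 2 ≤ p := hp.out.two_le
  have hεpos : (0:ℝ) ≤ (p : ℝ) ^ (-(1 : ℝ) / (p - 1)) := Real.rpow_nonneg (by positivity) _
  have hlt : s ^ (p - 1 : ℕ) < ((p : ℝ) ^ (-(1 : ℝ) / (p - 1))) ^ (p - 1 : ℕ) := by
    apply pow_lt_pow_left₀ hs h0
    omega
  refine hlt.trans_le ?_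
  rw [← Real.rpow_natCast ((p : ℝ) ^ (-(1 : ℝ) / (p - 1))) (p-1), ← Real.rpow_mul (by positivity)]
  have hne : ((p:ℝ) - 1) ≠ 0 := by linarith
  have hcast : ((p - 1 : ℕ) : ℝ) = (p : ℝ) - 1 := by
    push_cast [Nat.cast_sub (by omega : 1 ≤ p)]
    ring
  rw [hcast, div_mul_cancel₀ _ hne, Real.rpow_neg_one]

lemma step_norm {x : ℚ_[p]} (hx : ‖x - 1‖ < (p : ℝ) ^ (-(1 : ℝ) / (p - 1))) :
    ‖x ^ p - 1‖ = ‖x - 1‖ / p := by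
  have hp2 : 2 ≤ p := hp.out.two_le
  by_cases hx1 : x = 1
  · simp [hx1]
  set s := x - 1 with hs
  have hs0 : s ≠ 0 := sub_ne_zero.mpr hx1
  have hspos : 0 < ‖s‖ := norm_pos_iff.mpr hs0
  have hlt1 : ‖s‖ < 1 := hx.trans (eps_lt_one p)
  have hppos : (0:ℝ) < p := by exact_mod_cast hp.out.pos
  -- binomial expansion
  have hexp : x ^ p - 1 = (p : ℚ_[p]) * s + ∑ k ∈ Finset.Ico 2 (p+1), (p.choose k : ℚ_[p]) * s ^ k := by
    have hx' : x = s + 1 := by rw [hs]; ring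
    have e1 : x ^ p = ∑ k ∈ Finset.range (p+1), (p.choose k : ℚ_[p]) * s ^ k := by
      rw [hx', add_pow]
      exact Finset.sum_congr rfl (fun k _ => by rw [one_pow]; ring)
    rw [e1, Finset.range_eq_Ico, Finset.sum_eq_sum_Ico_succ_bot (by omega : 0 < p+1),
      Finset.sum_eq_sum_Ico_succ_bot (by omega : 1 < p+1)]
    simp only [pow_zero, pow_one, Nat.choose_zero_right, Nat.choose_one_right, Nat.cast_one]
    ring
  have hbound : ∀ k ∈ Finset.Ico 2 (p+1), ‖(p.choose k : ℚ_[p]) * s ^ k‖ < (p:ℝ)⁻¹ * ‖s‖ := by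
    intro k hk
    simp only [Finset.mem_Ico] at hk
    rcases eq_or_lt_of_le (Nat.lt_succ_iff.mp hk.2) with hkp | hkp
    · -- k = p
      rw [hkp, norm_mul, norm_pow]
      have h1 : ‖(p.choose p : ℚ_[p])‖ = 1 := by simp
      rw [h1, one_mul]
      have : ‖s‖ ^ p = ‖s‖ ^ (p-1) * ‖s‖ := by
        rw [← pow_succ]
        congr 1
        omega
      rw [this]
      exact mul_lt_mul_of_pos_right (eps_pow_aux p (norm_nonneg _) hx) hspos
    · -- 2 ≤ k < p
      rw [norm_mul, norm_pow]
      have hch : ‖(p.choose k : ℚ_[p])‖ ≤ (p:ℝ)⁻¹ := by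
        have hdvd : ((p:ℤ) ^ 1) ∣ (p.choose k : ℤ) := by
          simpa using Int.natCast_dvd_natCast.mpr (Nat.Prime.dvd_choose_self hp.out (by omega) hkp)
        have h2 := (Padic.norm_int_le_pow_iff_dvd (p.choose k : ℤ) 1).mpr hdvd
        have h3 : ((p.choose k : ℤ) : ℚ_[p]) = (p.choose k : ℚ_[p]) := by push_cast; ring
        rw [h3] at h2
        simpa [zpow_neg, zpow_one] using h2
      have hsk : ‖s‖ ^ k < ‖s‖ := by
        calc ‖s‖ ^ k ≤ ‖s‖ ^ 2 := pow_le_pow_of_le_one (norm_nonneg _) hlt1.le hk.1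
        _ = ‖s‖ * ‖s‖ := sq ‖s‖
        _ < 1 * ‖s‖ := by exact mul_lt_mul_of_pos_right hlt1 hspos
        _ = ‖s‖ := one_mul _
      calc ‖(p.choose k : ℚ_[p])‖ * ‖s‖ ^ k ≤ (p:ℝ)⁻¹ * ‖s‖ ^ k := by
            apply mul_le_mul_of_nonneg_right hch (by positivity)
      _ < (p:ℝ)⁻¹ * ‖s‖ := by
            apply mul_lt_mul_of_pos_left hsk (by positivity)
  have hRnorm : ‖∑ k ∈ Finset.Ico 2 (p+1), (p.choose k : ℚ_[p]) * s ^ k‖ < (p:ℝ)⁻¹ * ‖s‖ := by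
    rcases Finset.eq_empty_or_nonempty (Finset.Ico 2 (p+1)) with he | hne
    · rw [he]; simp; positivity
    · calc ‖∑ k ∈ Finset.Ico 2 (p+1), (p.choose k : ℚ_[p]) * s ^ k‖
          ≤ (Finset.Ico 2 (p+1)).sup' hne (fun k => ‖(p.choose k : ℚ_[p]) * s ^ k‖) :=
            Finset.Nonempty.norm_sum_le_sup'_norm hne _
      _ < (p:ℝ)⁻¹ * ‖s‖ := by
            obtain ⟨k, hk, hkeq⟩ := Finset.exists_mem_eq_sup' hne (fun k => ‖(p.choose k : ℚ_[p]) * s ^ k‖)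
            rw [hkeq]; exact hbound k hk
  have hps : ‖(p : ℚ_[p]) * s‖ = (p:ℝ)⁻¹ * ‖s‖ := by
    rw [norm_mul, Padic.norm_p]
  have hlt : ‖∑ k ∈ Finset.Ico 2 (p+1), (p.choose k : ℚ_[p]) * s ^ k‖ < ‖(p : ℚ_[p]) * s‖ := by
    rw [hps]; exact hRnorm
  rw [hexp, Padic.add_eq_max_of_ne (ne_of_lt hlt).symm, max_eq_left hlt.le, hps,
    inv_mul_eq_div]

lemma coprime_norm {x : ℚ_[p]} (hx : ‖x - 1‖ < 1) {u : ℕ} (hu : ¬ p ∣ u) :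
    ‖x ^ u - 1‖ = ‖x - 1‖ := by
  have hxle : ‖x‖ ≤ 1 := by
    calc ‖x‖ = ‖(x - 1) + 1‖ := by ring_nf
    _ ≤ max ‖x - 1‖ ‖(1 : ℚ_[p])‖ := Padic.nonarchimedean _ _
    _ ≤ 1 := by rw [norm_one]; exact max_le hx.le le_rfl
  have hpowle : ∀ i : ℕ, ‖x ^ i - 1‖ ≤ ‖x - 1‖ := by
    intro i
    rw [← geom_sum_mul, norm_mul]
    calc ‖∑ l ∈ Finset.range i, x ^ l‖ * ‖x - 1‖ ≤ 1 * ‖x - 1‖ := by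
          apply mul_le_mul_of_nonneg_right _ (norm_nonneg _)
          apply IsUltrametricDist.norm_sum_le_of_forall_le_of_nonneg zero_le_one
          intro l _
          rw [norm_pow]
          exact pow_le_one₀ (norm_nonneg _) hxle
    _ = ‖x - 1‖ := one_mul _
  have hG : ‖∑ i ∈ Finset.range u, x ^ i‖ = 1 := by
    have hdiff : ‖(∑ i ∈ Finset.range u, x ^ i) - (u : ℚ_[p])‖ < 1 := by
      have : (∑ i ∈ Finset.range u, x ^ i) - (u : ℚ_[p]) = ∑ i ∈ Finset.range u, (x ^ i - 1) := by
        rw [Finset.sum_sub_distrib]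
        simp
      rw [this]
      calc ‖∑ i ∈ Finset.range u, (x ^ i - 1)‖ ≤ ‖x - 1‖ := by
            apply IsUltrametricDist.norm_sum_le_of_forall_le_of_nonneg (norm_nonneg _)
            intro i _
            exact hpowle i
      _ < 1 := hx
    have hu1 : ‖(u : ℚ_[p])‖ = 1 := by
      have hle := Padic.norm_int_le_one (p := p) (u : ℤ)
      have hnlt : ¬ ‖((u:ℤ) : ℚ_[p])‖ < 1 := by
        rw [Padic.norm_intCast_lt_one_iff]
        exact_mod_cast hu
      have : ‖((u:ℤ) : ℚ_[p])‖ = 1 := le_antisymm hle (not_lt.mp hnlt)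
      exact_mod_cast this
    have : (∑ i ∈ Finset.range u, x ^ i) =
        ((∑ i ∈ Finset.range u, x ^ i) - (u : ℚ_[p])) + (u : ℚ_[p]) := by ring
    rw [this, Padic.add_eq_max_of_ne (by rw [hu1]; exact ne_of_lt hdiff),
      max_eq_right (by rw [hu1]; exact hdiff.le), hu1]
  rw [← geom_sum_mul, norm_mul, hG, one_mul]

lemma pow_ne_one_of_lt {x : ℚ_[p]} (hx : ‖x - 1‖ < (p : ℝ) ^ (-(1 : ℝ) / (p - 1)))
    (hx1 : x ≠ 1) : ∀ m : ℕ, 1 ≤ m → x ^ m ≠ 1 := by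
  have hp2 : 2 ≤ p := hp.out.two_le
  intro m
  induction m using Nat.strong_induction_on generalizing x with
  | _ m ih =>
    intro hm1
    by_cases hdvd : p ∣ m
    · obtain ⟨m', rfl⟩ := hdvd
      have hm' : 1 ≤ m' := by
        rcases Nat.eq_zero_or_pos m' with h0 | h1
        · subst h0; simp at hm1
        · exact h1
      have hxp1 : x ^ p ≠ 1 := by
        intro hcon
        have := step_norm hx
        rw [hcon, sub_self, norm_zero] at this
        have : ‖x - 1‖ = 0 := by
          field_simp at this
          linarith
        exact hx1 (by rwa [norm_eq_zero, sub_eq_zero] at this)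
      have hxp : ‖x ^ p - 1‖ < (p : ℝ) ^ (-(1 : ℝ) / (p - 1)) := by
        rw [step_norm hx]
        calc ‖x - 1‖ / p ≤ ‖x - 1‖ / 1 := by
              apply div_le_div_of_nonneg_left (norm_nonneg _) one_pos
              exact_mod_cast Nat.one_le_iff_ne_zero.mpr hp.out.pos.ne'
        _ = ‖x - 1‖ := div_one _
        _ < _ := hx
      have := ih m' (by nlinarith) hxp hxp1 hm'
      rw [pow_mul] at *
      exact this
    · intro hcon
      have := coprime_norm (hx.trans (eps_lt_one p)) hdvd
      rw [hcon, sub_self, norm_zero] at this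
      exact hx1 (by rw [← sub_eq_zero, ← norm_eq_zero, ← this])

lemma iter_norm {x : ℚ_[p]} (hx : ‖x - 1‖ < (p : ℝ) ^ (-(1 : ℝ) / (p - 1))) (N : ℕ) :
    ‖x ^ (p ^ N) - 1‖ = ‖x - 1‖ / (p : ℝ) ^ N ∧
      ‖x ^ (p ^ N) - 1‖ < (p : ℝ) ^ (-(1 : ℝ) / (p - 1)) := by
  have hppos : (0:ℝ) < p := by exact_mod_cast hp.out.pos
  induction N with
  | zero => simpa using hx
  | succ N ih =>
    have hstep := step_norm ih.2
    rw [← pow_mul, mul_comm (p^N) p, ← pow_succ'] at hstep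
    rw [hstep, ih.1]
    constructor
    · rw [div_div, ← pow_succ]
    · have h1 : (1:ℝ) ≤ p := by exact_mod_cast hp.out.one_le
      calc ‖x - 1‖ / ↑p ^ N / ↑p ≤ ‖x - 1‖ / ↑p ^ N := div_le_self (by positivity) h1
      _ = ‖x ^ p ^ N - 1‖ := ih.1.symm
      _ < _ := ih.2


lemma ratio_tendsto (u : ℕ → ℚ_[p]) (hu1 : Tendsto u atTop (nhds 1))
    (hne : ∀ N, u N ≠ 1) (hne0 : ∀ N, u N ≠ 0) (m : ℤ) :
    Tendsto (fun N => (1 - u N ^ m) / (1 - u N)) atTop (nhds ((m : ℤ) : ℚ_[p])) := by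
  obtain ⟨k, hk | hk⟩ := Int.eq_nat_or_neg m
  · subst hk
    have heq : ∀ N, ∑ i ∈ Finset.range k, (u N) ^ i = (1 - u N ^ (k:ℤ)) / (1 - u N) := by
      intro N
      have h1 : (1 : ℚ_[p]) - u N ≠ 0 := sub_ne_zero.mpr (Ne.symm (hne N))
      have h2 : u N - 1 ≠ 0 := sub_ne_zero.mpr (hne N)
      rw [zpow_natCast, geom_sum_eq (hne N)]
      field_simp
      ring
    have hcont : Continuous fun y : ℚ_[p] => ∑ i ∈ Finset.range k, y ^ i :=
      continuous_finset_sum _ fun i _ => continuous_pow i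
    have htend := (hcont.tendsto 1).comp hu1
    have hval : (∑ i ∈ Finset.range k, (1:ℚ_[p]) ^ i) = ((k : ℤ) : ℚ_[p]) := by simp
    rw [hval] at htend
    exact Tendsto.congr heq htend
  · subst hk
    have heq : ∀ N, -((u N)^k)⁻¹ * ∑ i ∈ Finset.range k, (u N) ^ i
        = (1 - u N ^ (-(k:ℤ))) / (1 - u N) := by
      intro N
      have hk0 : (u N)^k ≠ 0 := pow_ne_zero _ (hne0 N)
      have h1 : (1 : ℚ_[p]) - u N ≠ 0 := sub_ne_zero.mpr (Ne.symm (hne N))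
      have h2 : u N - 1 ≠ 0 := sub_ne_zero.mpr (hne N)
      rw [zpow_neg, zpow_natCast, geom_sum_eq (hne N)]
      field_simp
      ring
    have h1 : ContinuousAt (fun y : ℚ_[p] => -(y ^ k)⁻¹ * ∑ i ∈ Finset.range k, y ^ i) 1 := by
      apply ContinuousAt.mul
      · exact ((continuous_pow k).continuousAt.inv₀ (by simp)).neg
      · exact (continuous_finset_sum _ fun i _ => continuous_pow i).continuousAt
    have htend := h1.tendsto.comp hu1
    have hval : -((1:ℚ_[p]) ^ k)⁻¹ * ∑ i ∈ Finset.range k, (1:ℚ_[p]) ^ i = ((-(k:ℤ) : ℤ) : ℚ_[p]) := by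
      simp
    rw [hval] at htend
    exact Tendsto.congr heq htend

end aux

theorem padic_q_integral_beta_h (p : ℕ) [Fact p.Prime] (q : ℤ_[p])
    (hq : ‖(q : ℚ_[p]) - 1‖ < (p : ℝ) ^ (-(1 : ℝ) / (p - 1))) (hq1 : q ≠ 1)
    (h : ℤ) (n α : ℕ) (hα : 1 ≤ α)
    (hnz : ∀ j : ℕ, j ≤ n → (j : ℤ) * α + h ≠ 0) :
    Tendsto
      (fun N : ℕ =>
        ((1 - (q : ℚ_[p])) / (1 - (q : ℚ_[p]) ^ (p ^ N))) *
          ∑ x ∈ Finset.range (p ^ N),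
            (q : ℚ_[p]) ^ (h * x) *
              ((1 - (q : ℚ_[p]) ^ (α * x)) / (1 - (q : ℚ_[p]))) ^ n)
      atTop
      (nhds ((1 / (1 - (q : ℚ_[p])) ^ n) *
        ∑ j ∈ Finset.range (n + 1),
          (n.choose j : ℚ_[p]) * (-1) ^ j *
            ((((j : ℤ) * α + h : ℤ) : ℚ_[p]) /
              ((1 - (q : ℚ_[p]) ^ ((j : ℤ) * α + h)) / (1 - (q : ℚ_[p])))))) := by
  have hεlt1 := eps_lt_one p
  set Q : ℚ_[p] := (q : ℚ_[p]) with hQdef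
  have hQ1 : Q ≠ 1 := by
    intro hcon; apply hq1
    rw [hQdef] at hcon
    exact Subtype.coe_injective (by simpa using hcon)
  have hQ0 : Q ≠ 0 := by
    intro hcon
    rw [hcon, zero_sub, norm_neg, norm_one] at hq
    exact absurd (hq.trans hεlt1) (lt_irrefl 1)
  have h1Q : (1:ℚ_[p]) - Q ≠ 0 := sub_ne_zero.mpr (Ne.symm hQ1)
  set m : ℕ → ℤ := fun j => (j:ℤ) * α + h with hm
  set c : ℕ → ℚ_[p] := fun j => (n.choose j : ℚ_[p]) * (-1)^j with hc
  set u : ℕ → ℚ_[p] := fun N => Q ^ (p ^ N) with hu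
  have hzne : ∀ mm : ℤ, mm ≠ 0 → Q ^ mm ≠ 1 := by
    intro mm hmm
    obtain ⟨k, hk | hk⟩ := Int.eq_nat_or_neg mm
    · subst hk
      have hk0 : k ≠ 0 := by rintro rfl; simp at hmm
      rw [zpow_natCast]
      exact pow_ne_one_of_lt hq hQ1 k (by omega)
    · subst hk
      have hk0 : k ≠ 0 := by rintro rfl; simp at hmm
      rw [zpow_neg, zpow_natCast]
      intro hcon
      exact pow_ne_one_of_lt hq hQ1 k (by omega) (inv_eq_one.mp hcon)
  have hune : ∀ N, u N ≠ 1 := fun N =>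
    pow_ne_one_of_lt hq hQ1 (p^N) (Nat.one_le_pow _ _ (Fact.out : p.Prime).pos)
  have hu0 : ∀ N, u N ≠ 0 := fun N => pow_ne_zero _ hQ0
  have hutend : Tendsto u atTop (nhds 1) := by
    rw [tendsto_iff_norm_sub_tendsto_zero]
    have heq : ∀ N, ‖u N - 1‖ = ‖Q - 1‖ * (1/(p:ℝ))^N := by
      intro N
      rw [hu, (iter_norm hq N).1, one_div, inv_pow, div_eq_mul_inv]
    have h2 : Tendsto (fun N : ℕ => ‖Q - 1‖ * (1/(p:ℝ))^N) atTop (nhds 0) := by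
      have hplt : (1:ℝ)/(p:ℝ) < 1 := by
        rw [div_lt_one (by exact_mod_cast (Fact.out : p.Prime).pos : (0:ℝ) < p)]
        exact_mod_cast (Fact.out : p.Prime).one_lt
      have := tendsto_pow_atTop_nhds_zero_of_lt_one (by positivity) hplt
      simpa using this.const_mul ‖Q - 1‖
    exact Tendsto.congr (fun N => (heq N).symm) h2
  -- key reformulation
  have expand : ∀ x : ℕ, Q ^ (h * (x:ℤ)) * ((1 - Q ^ (α * x))/(1-Q))^n
      = ∑ j ∈ Finset.range (n+1), (1/(1-Q)^n) * (c j) * (Q ^ (m j)) ^ x := by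
    intro x
    have hbinom : (1 - Q ^ (α*x))^n = ∑ j ∈ Finset.range (n+1), (c j) * (Q^(α*x))^j := by
      calc (1 - Q^(α*x))^n = (-(Q^(α*x)) + 1)^n := by ring
      _ = ∑ j ∈ Finset.range (n+1), (-(Q^(α*x)))^j * 1^(n-j) * (n.choose j) := add_pow _ _ n
      _ = ∑ j ∈ Finset.range (n+1), c j * (Q^(α*x))^j :=
          Finset.sum_congr rfl fun j _ => by rw [one_pow, neg_pow, hc]; ring
    rw [div_pow, hbinom, Finset.sum_div, Finset.mul_sum]
    apply Finset.sum_congr rfl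
    intro j hj
    have hz : Q ^ (h * (x:ℤ)) * ((Q^(α*x):ℚ_[p]))^j = (Q ^ (m j)) ^ x := by
      rw [← pow_mul, ← zpow_natCast Q (α*x*j), ← zpow_add₀ hQ0,
        ← zpow_natCast (Q ^ (m j)) x, ← zpow_mul]
      congr 1
      push_cast [hm]
      ring
    rw [← hz]
    ring
  have key : ∀ N : ℕ,
      ((1 - Q) / (1 - Q ^ (p ^ N))) *
        ∑ x ∈ Finset.range (p ^ N), Q ^ (h * (x:ℤ)) * ((1 - Q ^ (α * x)) / (1 - Q)) ^ n
      = (1/(1-Q)^n) * ∑ j ∈ Finset.range (n+1),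
          (c j * ((1-Q) / (1 - Q ^ (m j)))) * ((1 - (u N) ^ (m j)) / (1 - u N)) := by
    intro N
    calc ((1 - Q) / (1 - Q ^ (p ^ N))) *
        ∑ x ∈ Finset.range (p ^ N), Q ^ (h * (x:ℤ)) * ((1 - Q ^ (α * x)) / (1 - Q)) ^ n
        = ((1 - Q) / (1 - u N)) * ∑ x ∈ Finset.range (p ^ N), ∑ j ∈ Finset.range (n+1),
            (1/(1-Q)^n) * (c j) * (Q ^ (m j)) ^ x := by
          congr 1
          exact Finset.sum_congr rfl fun x _ => expand x
      _ = ((1 - Q) / (1 - u N)) * ∑ j ∈ Finset.range (n+1),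
            (1/(1-Q)^n) * (c j) * ∑ x ∈ Finset.range (p ^ N), (Q ^ (m j)) ^ x := by
          rw [Finset.sum_comm]
          congr 1
          exact Finset.sum_congr rfl fun j _ => (Finset.mul_sum _ _ _).symm
      _ = (1/(1-Q)^n) * ∑ j ∈ Finset.range (n+1),
            (c j * ((1-Q) / (1 - Q ^ (m j)))) * ((1 - (u N) ^ (m j)) / (1 - u N)) := by
          rw [Finset.mul_sum, Finset.mul_sum]
          apply Finset.sum_congr rfl
          intro j hj
          have hjn : j ≤ n := Nat.lt_succ_iff.mp (Finset.mem_range.mp hj)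
          have hgeom : ∑ x ∈ Finset.range (p ^ N), (Q ^ (m j)) ^ x
              = (1 - (u N) ^ (m j)) / (1 - Q ^ (m j)) := by
            rw [geom_sum_eq (hzne (m j) (hnz j hjn))]
            have hpow : (Q ^ (m j)) ^ (p^N) = (u N) ^ (m j) := by
              show (Q ^ (m j)) ^ (p^N) = (Q ^ (p^N)) ^ (m j)
              rw [← zpow_natCast (Q ^ (m j)) (p^N), ← zpow_mul,
                ← zpow_natCast Q (p^N), ← zpow_mul, mul_comm]
            rw [hpow, ← neg_div_neg_eq, neg_sub, neg_sub]
          rw [hgeom]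
          ring
  -- limit computation
  have htends : Tendsto
      (fun N => (1/(1-Q)^n) * ∑ j ∈ Finset.range (n+1),
          (c j * ((1-Q) / (1 - Q ^ (m j)))) * ((1 - (u N) ^ (m j)) / (1 - u N)))
      atTop
      (nhds ((1/(1-Q)^n) * ∑ j ∈ Finset.range (n+1),
          (c j * ((1-Q) / (1 - Q ^ (m j)))) * ((m j : ℤ) : ℚ_[p]))) := by
    apply Tendsto.const_mul
    apply tendsto_finset_sum
    intro j _
    exact (ratio_tendsto u hutend hune hu0 (m j)).const_mul _
  have hval : (1/(1-Q)^n) * ∑ j ∈ Finset.range (n+1),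
        (c j * ((1-Q) / (1 - Q ^ (m j)))) * ((m j : ℤ) : ℚ_[p])
      = (1 / (1 - Q) ^ n) *
        ∑ j ∈ Finset.range (n + 1),
          (n.choose j : ℚ_[p]) * (-1) ^ j *
            ((((j : ℤ) * α + h : ℤ) : ℚ_[p]) / ((1 - Q ^ ((j : ℤ) * α + h)) / (1 - Q))) := by
    congr 1
    apply Finset.sum_congr rfl
    intro j _
    rw [div_div_eq_mul_div, hc, hm]
    ring
  rw [← hval]
  exact Tendsto.congr (fun N => (key N).symm) htends
end

section
/- Let q be real with 0 < q < 1, let d ≥ 1, n ≥ 0, h be integers, α ≥ 1 an integer, and w a rational number ≥ 0, with all relevant q-integers nonzero. Define β_n^{(h,1)}(w, q | α) = (1/(1-q)^n) Σ_{j=0}^{n} C(n,j)(-q^w)^j (jα+h)/[jα+h : q], where [m : q] = (1-q^m)/(1-q) and q^w = exp(w log q). Then β_n^{(h,1)}(w, q | α) = [d : q]^{n-1} Σ_{i=0}^{d-1} q^{ih} β_n^{(h,1)}((w + αi)/d, q^d | α). -/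
open Finset

/-- `β_n^{(h,1)}(w, q | α)` at a rational argument `w`, with `q^w` interpreted as
`exp (w * log q)`, i.e. the real power `q ^ (w : ℝ)`. -/
noncomputable def betaPolyQ (q : ℝ) (h : ℤ) (α : ℤ) (w : ℚ) (n : ℕ) : ℝ :=
  (1 / (1 - q) ^ n) *
    ∑ j ∈ Finset.range (n + 1),
      (n.choose j : ℝ) * (-(q ^ (w : ℝ))) ^ j *
        (((j : ℤ) * α + h : ℤ) : ℝ) / qint q ((j : ℤ) * α + h)

private lemma rpow_step (q : ℝ) (hq : 0 < q) (d : ℕ) (hd : d ≠ 0) (w : ℚ) (α : ℤ) (i : ℕ) :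
    (q ^ d : ℝ) ^ ((((w + (α : ℚ) * (i : ℚ)) / (d : ℚ)) : ℚ) : ℝ)
      = q ^ ((w : ℝ)) * q ^ (α * (i : ℤ)) := by
  have hdR : (d : ℝ) ≠ 0 := Nat.cast_ne_zero.2 hd
  rw [← Real.rpow_natCast q d, ← Real.rpow_mul hq.le, ← Real.rpow_intCast q (α * (i : ℤ)),
    ← Real.rpow_add hq]
  congr 1
  push_cast
  field_simp

theorem changhee_distribution_formula_r1 (q : ℝ) (hq0 : 0 < q) (hq1 : q < 1)
    (d : ℕ) (hd : 1 ≤ d) (n : ℕ) (h : ℤ) (α : ℤ) (hα : 1 ≤ α)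
    (w : ℚ) (hw : 0 ≤ w)
    (hnz : ∀ j : ℕ, j ≤ n → (j : ℤ) * α + h ≠ 0) :
    betaPolyQ q h α w n =
      qint q d ^ ((n : ℤ) - 1) *
        ∑ i ∈ Finset.range d,
          q ^ ((i : ℤ) * h) * betaPolyQ (q ^ d) h α ((w + α * i) / d) n := by
  have hdz : d ≠ 0 := by omega
  have hqne : q ≠ 0 := hq0.ne'
  have ha : (1 : ℝ) - q ≠ 0 := sub_ne_zero.2 (by linarith)
  have hinj : Function.Injective fun m : ℤ => q ^ m :=
    (zpow_right_strictAnti₀ hq0 hq1).injective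
  have hne1 : ∀ m : ℤ, m ≠ 0 → q ^ m ≠ 1 := by
    intro m hm he
    exact hm (hinj (by simpa using he))
  have hdZ : (d : ℤ) ≠ 0 := by exact_mod_cast hdz
  have hb : (1 : ℝ) - q ^ (d : ℤ) ≠ 0 := sub_ne_zero.2 (fun e => hne1 d hdZ e.symm)
  have hQ : qint q d ≠ 0 := div_ne_zero hb ha
  have key : ∀ j ∈ Finset.range (n + 1),
      (∑ i ∈ Finset.range d, qint q d ^ ((n : ℤ) - 1) *
        (q ^ ((i : ℤ) * h) * ((1 / (1 - q ^ d) ^ n) *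
          ((n.choose j : ℝ) * (-((q ^ d : ℝ) ^ ((((w + (α : ℚ) * (i : ℚ)) / (d : ℚ)) : ℚ) : ℝ))) ^ j *
            (((j : ℤ) * α + h : ℤ) : ℝ) / qint (q ^ d) ((j : ℤ) * α + h))))) =
      (1 / (1 - q) ^ n) *
        ((n.choose j : ℝ) * (-(q ^ ((w : ℝ)))) ^ j *
          (((j : ℤ) * α + h : ℤ) : ℝ) / qint q ((j : ℤ) * α + h)) := by
    intro j hj
    have hjn : j ≤ n := by simpa [Nat.lt_succ_iff] using hj
    have hm : (j : ℤ) * α + h ≠ 0 := hnz j hjn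
    have hc : (1 : ℝ) - q ^ ((j : ℤ) * α + h) ≠ 0 :=
      sub_ne_zero.2 (fun e => hne1 _ hm e.symm)
    have hx : q ^ ((j : ℤ) * α + h) ≠ 1 := hne1 _ hm
    have hdm : (d : ℤ) * ((j : ℤ) * α + h) ≠ 0 := mul_ne_zero hdZ hm
    have he : (1 : ℝ) - q ^ ((d : ℤ) * ((j : ℤ) * α + h)) ≠ 0 :=
      sub_ne_zero.2 (fun e => hne1 _ hdm e.symm)
    have hterm : ∀ i ∈ Finset.range d,
        qint q d ^ ((n : ℤ) - 1) *
          (q ^ ((i : ℤ) * h) * ((1 / (1 - q ^ d) ^ n) *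
            ((n.choose j : ℝ) * (-((q ^ d : ℝ) ^ ((((w + (α : ℚ) * (i : ℚ)) / (d : ℚ)) : ℚ) : ℝ))) ^ j *
              (((j : ℤ) * α + h : ℤ) : ℝ) / qint (q ^ d) ((j : ℤ) * α + h)))) =
        (qint q d ^ ((n : ℤ) - 1) * (1 / (1 - q ^ d) ^ n) *
          ((n.choose j : ℝ) * (-(q ^ ((w : ℝ)))) ^ j *
            (((j : ℤ) * α + h : ℤ) : ℝ) / qint (q ^ d) ((j : ℤ) * α + h))) *
          (q ^ ((j : ℤ) * α + h)) ^ i := by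
      intro i _
      rw [rpow_step q hq0 d hdz w α i, ← neg_mul, mul_pow,
        ← zpow_natCast (q ^ (α * (i : ℤ))) j, ← zpow_mul,
        ← zpow_natCast (q ^ ((j : ℤ) * α + h)) i, ← zpow_mul]
      have hexp : (i : ℤ) * h + α * (i : ℤ) * (j : ℤ) = ((j : ℤ) * α + h) * (i : ℤ) := by ring
      rw [show (q:ℝ) ^ (((j : ℤ) * α + h) * (i : ℤ)) = q ^ ((i : ℤ) * h) * q ^ (α * (i : ℤ) * (j : ℤ)) by
        rw [← zpow_add₀ hqne, hexp]]
      ring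
    rw [Finset.sum_congr rfl hterm, ← Finset.mul_sum,
      geom_sum_eq hx d]
    rw [zpow_sub_one₀ hQ, zpow_natCast]
    rw [show ((q:ℝ) ^ ((j : ℤ) * α + h)) ^ d = q ^ ((d : ℤ) * ((j : ℤ) * α + h)) by
      rw [← zpow_natCast (q ^ ((j : ℤ) * α + h)) d, ← zpow_mul, mul_comm]]
    rw [show ((q:ℝ) ^ d) = q ^ (d : ℤ) from (zpow_natCast q d).symm]
    unfold qint
    rw [show ((q:ℝ) ^ (d : ℤ)) ^ ((j : ℤ) * α + h) = q ^ ((d : ℤ) * ((j : ℤ) * α + h)) from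
      (zpow_mul q (d : ℤ) _).symm]
    set X := (q:ℝ) ^ ((j : ℤ) * α + h) with hXdef
    set Y := (q:ℝ) ^ ((d : ℤ) * ((j : ℤ) * α + h)) with hYdef
    set QD := (q:ℝ) ^ (d : ℤ) with hQDdef
    set P := (-((q:ℝ) ^ ((w : ℝ)))) ^ j with hPdef
    have hX1 : X - 1 ≠ 0 := sub_ne_zero.2 hx
    have hc' : (1:ℝ) - X ≠ 0 := hc
    have he' : (1:ℝ) - Y ≠ 0 := he
    have hb' : (1:ℝ) - QD ≠ 0 := hb
    field_simp
    have hpow : (1 - q) ^ n * (-(QD * (1 - q)⁻¹) + (1 - q)⁻¹) ^ n = (1 - QD) ^ n := by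
      rw [← mul_pow]
      congr 1
      linear_combination (1 - QD) * mul_inv_cancel₀ ha
    linear_combination (↑(n.choose j) * P * (-(Y * X) + Y + X - 1)) * hpow
  simp only [betaPolyQ, Finset.mul_sum]
  rw [Finset.sum_comm]
  exact (Finset.sum_congr rfl key).symm
end

section
/- Let q be real with 0 < q < 1, h an integer, n, m natural numbers, and α ≥ 1 an integer with jα + h ≠ 0 for 0 ≤ j ≤ n. Define β_n^{(h,1)}(q|α) = (1/(1-q)^n) Σ_{j=0}^{n} C(n,j)(-1)^j (jα+h)/[jα+h]. Then Σ_{i=0}^{m} C(m,i)(q-1)^i β_i^{(h,1)}(q|α) = (mα + h)/[mα + h], provided mα + h ≠ 0. -/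
open Finset

/-- The extended Changhee q-Bernoulli numbers `β_n^{(h,1)}(q | α)`. -/
noncomputable def changheeBeta1 (q : ℝ) (h : ℤ) (α : ℤ) (n : ℕ) : ℝ :=
  (1 / (1 - q) ^ n) *
    ∑ j ∈ Finset.range (n + 1),
      (n.choose j : ℝ) * (-1) ^ j *
        (((j : ℤ) * α + h : ℤ) : ℝ) / qint q ((j : ℤ) * α + h)

lemma alt_sum_real (n : ℕ) :
    (∑ k ∈ range (n + 1), ((-1) ^ k * n.choose k : ℝ)) = if n = 0 then 1 else 0 := by
  have := Int.alternating_sum_range_choose (n := n)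
  exact_mod_cast congrArg (Int.cast : ℤ → ℝ) this

lemma binom_inversion (f : ℕ → ℝ) (m : ℕ) :
    ∑ i ∈ range (m + 1), (m.choose i : ℝ) * (-1) ^ i *
      ∑ j ∈ range (i + 1), (i.choose j : ℝ) * (-1) ^ j * f j = f m := by
  have key : ∑ i ∈ range (m + 1), ∑ j ∈ range (i + 1),
      (m.choose i : ℝ) * (-1) ^ i * ((i.choose j : ℝ) * (-1) ^ j * f j)
      = ∑ j ∈ range (m + 1), ∑ i ∈ Finset.Ico j (m + 1),
      (m.choose i : ℝ) * (-1) ^ i * ((i.choose j : ℝ) * (-1) ^ j * f j) := by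
    simp only [← Nat.Ico_zero_eq_range]
    exact (Finset.sum_Ico_Ico_comm 0 (m + 1)
      (fun j i => (m.choose i : ℝ) * (-1) ^ i * ((i.choose j : ℝ) * (-1) ^ j * f j))).symm
  calc ∑ i ∈ range (m + 1), (m.choose i : ℝ) * (-1) ^ i *
          ∑ j ∈ range (i + 1), (i.choose j : ℝ) * (-1) ^ j * f j
      = ∑ i ∈ range (m + 1), ∑ j ∈ range (i + 1),
          (m.choose i : ℝ) * (-1) ^ i * ((i.choose j : ℝ) * (-1) ^ j * f j) := by
        simp [Finset.mul_sum]
    _ = ∑ j ∈ range (m + 1), ∑ i ∈ Finset.Ico j (m + 1),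
          (m.choose i : ℝ) * (-1) ^ i * ((i.choose j : ℝ) * (-1) ^ j * f j) := key
    _ = f m := by
        have step : ∀ j ∈ range (m + 1),
            (∑ i ∈ Finset.Ico j (m + 1),
              (m.choose i : ℝ) * (-1) ^ i * ((i.choose j : ℝ) * (-1) ^ j * f j))
            = (if j = m then 1 else 0) * f j := by
          intro j hj
          rw [mem_range] at hj
          have hjm : j ≤ m := Nat.lt_succ_iff.mp hj
          rw [Finset.sum_Ico_eq_sum_range]
          have hrange : m + 1 - j = (m - j) + 1 := by omega
          rw [hrange]
          have hterm : ∀ k ∈ range ((m - j) + 1),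
              (m.choose (j + k) : ℝ) * (-1) ^ (j + k) *
                (((j + k).choose j : ℝ) * (-1) ^ j * f j)
              = ((m.choose j : ℝ) * f j) * ((-1) ^ k * ((m - j).choose k : ℝ)) := by
            intro k hk
            rw [mem_range] at hk
            have hkle : j + k ≤ m := by omega
            have hc : m.choose (j + k) * (j + k).choose j
                = m.choose j * (m - j).choose k := by
              have := Nat.choose_mul (n := m) (k := j + k) (s := j) (Nat.le_add_right _ _)
              simpa using this
            have hcR : (m.choose (j + k) : ℝ) * ((j + k).choose j : ℝ)
                = (m.choose j : ℝ) * ((m - j).choose k : ℝ) := by exact_mod_cast hc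
            have hsign : ((-1 : ℝ)) ^ (j + k) * (-1) ^ j = (-1) ^ k := by
              rw [pow_add, mul_right_comm, ← pow_add, ← two_mul, pow_mul]
              norm_num
            calc (m.choose (j + k) : ℝ) * (-1) ^ (j + k) *
                    (((j + k).choose j : ℝ) * (-1) ^ j * f j)
                = ((m.choose (j + k) : ℝ) * ((j + k).choose j : ℝ)) *
                    ((-1) ^ (j + k) * (-1) ^ j) * f j := by ring
              _ = ((m.choose j : ℝ) * ((m - j).choose k : ℝ)) * ((-1) ^ k) * f j := by
                  rw [hcR, hsign]
              _ = ((m.choose j : ℝ) * f j) * ((-1) ^ k * ((m - j).choose k : ℝ)) := by ring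
          rw [Finset.sum_congr rfl hterm, ← Finset.mul_sum, alt_sum_real]
          by_cases hjm' : j = m
          · subst hjm'; simp
          · have : m - j ≠ 0 := by omega
            simp [this, hjm']
        rw [Finset.sum_congr rfl step]
        simp
theorem changhee_inverse_formula_r1 (q : ℝ) (hq0 : 0 < q) (hq1 : q < 1)
    (h : ℤ) (α : ℤ) (hα : 1 ≤ α) (n m : ℕ)
    (hnz : ∀ j : ℕ, j ≤ n → (j : ℤ) * α + h ≠ 0)
    (hm : (m : ℤ) * α + h ≠ 0)
    (hnz' : ∀ i : ℕ, i ≤ m → ∀ j : ℕ, j ≤ i → (j : ℤ) * α + h ≠ 0) :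
    ∑ i ∈ Finset.range (m + 1),
        (m.choose i : ℝ) * (q - 1) ^ i * changheeBeta1 q h α i =
      (((m : ℤ) * α + h : ℤ) : ℝ) / qint q ((m : ℤ) * α + h) := by
  have h1q : (1 : ℝ) - q ≠ 0 := by linarith
  set f : ℕ → ℝ := fun j => (((j : ℤ) * α + h : ℤ) : ℝ) / qint q ((j : ℤ) * α + h) with hf
  have hbeta : ∀ i, (q - 1) ^ i * changheeBeta1 q h α i
      = (-1) ^ i * ∑ j ∈ range (i + 1), (i.choose j : ℝ) * (-1) ^ j * f j := by
    intro i
    unfold changheeBeta1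
    rw [show (q - 1 : ℝ) = (-1) * (1 - q) by ring, mul_pow]
    have : (1 - q) ^ i * (1 / (1 - q) ^ i) = 1 := by
      field_simp
    calc (-1 : ℝ) ^ i * (1 - q) ^ i * ((1 / (1 - q) ^ i) *
          ∑ j ∈ range (i + 1), (i.choose j : ℝ) * (-1) ^ j *
            (((j : ℤ) * α + h : ℤ) : ℝ) / qint q ((j : ℤ) * α + h))
        = (-1) ^ i * (((1 - q) ^ i * (1 / (1 - q) ^ i)) *
          ∑ j ∈ range (i + 1), (i.choose j : ℝ) * (-1) ^ j *
            (((j : ℤ) * α + h : ℤ) : ℝ) / qint q ((j : ℤ) * α + h)) := by ring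
      _ = (-1) ^ i * ∑ j ∈ range (i + 1), (i.choose j : ℝ) * (-1) ^ j * f j := by
          rw [this, one_mul]
          congr 1
          refine Finset.sum_congr rfl fun j hj => ?_
          rw [hf]
          ring
  calc ∑ i ∈ range (m + 1), (m.choose i : ℝ) * (q - 1) ^ i * changheeBeta1 q h α i
      = ∑ i ∈ range (m + 1), (m.choose i : ℝ) * (-1) ^ i *
          ∑ j ∈ range (i + 1), (i.choose j : ℝ) * (-1) ^ j * f j := by
        refine Finset.sum_congr rfl fun i hi => ?_
        rw [mul_assoc, hbeta i, mul_assoc]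
    _ = f m := binom_inversion f m
end
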